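/- Let C be a separable Frobenius monoid in a monoidal category V and let X be a right C-comodule such that the functor X ⊗ − : V ⟶ V preserves reflexive coequalizers. Let Y₁, Y₂, Y₃ be left C-comodules, let u, v : Y₁ ⟶ Y₂ be comodule morphisms admitting a common section s : Y₂ ⟶ Y₁ (a comodule morphism with u ∘ s = v ∘ s = 1_{Y₂}), and let q : Y₂ ⟶ Y₃ be a comodule morphism which is a coequalizer of (u, v) in V. For each j let a_j := (1_X ⊗ ε ⊗ 1) ∘ (1_X ⊗ μ ⊗ 1) ∘ (δᵣ ⊗ δₗ^{Y_j}) be the cotensor idempotent on X ⊗ Y_j, and suppose each a_j splits as a_j = i_j ∘ p_j with p_j ∘ i_j = 1 (so the splitting object is the cotensor product X ⊗_C Y_j). Then the induced morphism p₃ ∘ (1_X ⊗ q) ∘ i₂ : X ⊗_C Y₂ ⟶ X ⊗_C Y₃ is a coequalizer in V of the induced pair (p₂ ∘ (1_X ⊗ u) ∘ i₁, p₂ ∘ (1_X ⊗ v) ∘ i₁) : X ⊗_C Y₁ ⟶ X ⊗_C Y₂. In other words, the functor X ⊗_C − preserves reflexive coequalizers of left C-comodules. -/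

import Mathlib

open CategoryTheory MonoidalCategory CategoryTheory.Limits

/-- A separable Frobenius monoid in a monoidal category `V`. -/
structure SeparableFrobenius (V : Type*) [Category V] [MonoidalCategory V] where
  C : V
  mul : C ⊗ C ⟶ C
  one : 𝟙_ V ⟶ C
  comul : C ⟶ C ⊗ C
  counit : C ⟶ 𝟙_ V
  mul_assoc : (mul ▷ C) ≫ mul = (α_ C C C).hom ≫ (C ◁ mul) ≫ mul
  one_mul : (one ▷ C) ≫ mul = (λ_ C).hom
  mul_one : (C ◁ one) ≫ mul = (ρ_ C).hom
  comul_coassoc : comul ≫ (C ◁ comul) = comul ≫ (comul ▷ C) ≫ (α_ C C C).hom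
  counit_comul : comul ≫ (counit ▷ C) = (λ_ C).inv
  comul_counit : comul ≫ (C ◁ counit) = (ρ_ C).inv
  frobenius₁ : (comul ▷ C) ≫ (α_ C C C).hom ≫ (C ◁ mul) = mul ≫ comul
  frobenius₂ : (C ◁ comul) ≫ (α_ C C C).inv ≫ (mul ▷ C) = mul ≫ comul
  separable : comul ≫ mul = 𝟙 C

lemma a_natural {V : Type*} [Category V] [MonoidalCategory V] (F : SeparableFrobenius V)
    (X : V) (δr : X ⟶ X ⊗ F.C) {Y Y' : V} (δl : Y ⟶ F.C ⊗ Y) (δl' : Y' ⟶ F.C ⊗ Y')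
    (f : Y ⟶ Y') (hf : f ≫ δl' = δl ≫ (F.C ◁ f)) :
    (X ◁ f) ≫ ((δr ⊗ₘ δl') ≫ (α_ X F.C (F.C ⊗ Y')).hom ≫ (X ◁ (α_ F.C F.C Y').inv) ≫
        (X ◁ (F.mul ▷ Y')) ≫ (X ◁ (F.counit ▷ Y')) ≫ (X ◁ (λ_ Y').hom))
    = ((δr ⊗ₘ δl) ≫ (α_ X F.C (F.C ⊗ Y)).hom ≫ (X ◁ (α_ F.C F.C Y).inv) ≫
        (X ◁ (F.mul ▷ Y)) ≫ (X ◁ (F.counit ▷ Y)) ≫ (X ◁ (λ_ Y).hom)) ≫ (X ◁ f) := by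
  have h2 : F.C ◁ (F.C ◁ f) ≫ (α_ F.C F.C Y').inv ≫ F.mul ▷ Y' ≫ F.counit ▷ Y' ≫ (λ_ Y').hom
      = (α_ F.C F.C Y).inv ≫ F.mul ▷ Y ≫ F.counit ▷ Y ≫ (λ_ Y).hom ≫ f := by
    rw [associator_inv_naturality_right_assoc, whisker_exchange_assoc, whisker_exchange_assoc]
    simp
  have h1 : (X ◁ f) ≫ (δr ⊗ₘ δl') = (δr ⊗ₘ δl) ≫ ((X ⊗ F.C) ◁ (F.C ◁ f)) := by
    rw [← id_tensorHom, ← id_tensorHom, tensorHom_comp_tensorHom, tensorHom_comp_tensorHom, Category.id_comp,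
      Category.comp_id, hf]
  rw [reassoc_of% h1]
  simp only [associator_naturality_right_assoc, ← MonoidalCategory.whiskerLeft_comp,
    Category.assoc]
  rw [h2]

set_option maxHeartbeats 1000000 in
/-- If `C` is a separable Frobenius monoid and `X` is a right `C`-comodule
such that `X ⊗ −` preserves reflexive coequalizers, then the functor `X ⊗_C −` (computed by
splitting the cotensor idempotents) preserves reflexive coequalizers of left `C`-comodules. -/
theorem cotensor_functor_preserves_reflexive_coequalizers
    {V : Type*} [Category V] [MonoidalCategory V] (F : SeparableFrobenius V)
    (X : V) (δr : X ⟶ X ⊗ F.C)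
    (hXcoassoc : δr ≫ (X ◁ F.comul) = δr ≫ (δr ▷ F.C) ≫ (α_ X F.C F.C).hom)
    (hXcounit : δr ≫ (X ◁ F.counit) = (ρ_ X).inv)
    -- `X ⊗ −` preserves reflexive coequalizers
    (hpres : ∀ (A B : V) (f g : A ⟶ B) (s : B ⟶ A), s ≫ f = 𝟙 B → s ≫ g = 𝟙 B →
      ∀ (Q : V) (π : B ⟶ Q) (hπ : f ≫ π = g ≫ π), IsColimit (Cofork.ofπ π hπ) →
        ∀ (w : (X ◁ f) ≫ (X ◁ π) = (X ◁ g) ≫ (X ◁ π)),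
          Nonempty (IsColimit (Cofork.ofπ (X ◁ π) w)))
    -- the left C-comodules Y₁, Y₂, Y₃
    (Y₁ Y₂ Y₃ : V) (δl₁ : Y₁ ⟶ F.C ⊗ Y₁) (δl₂ : Y₂ ⟶ F.C ⊗ Y₂) (δl₃ : Y₃ ⟶ F.C ⊗ Y₃)
    (hco₁ : δl₁ ≫ (F.C ◁ δl₁) = δl₁ ≫ (F.comul ▷ Y₁) ≫ (α_ F.C F.C Y₁).hom)
    (hcu₁ : δl₁ ≫ (F.counit ▷ Y₁) = (λ_ Y₁).inv)
    (hco₂ : δl₂ ≫ (F.C ◁ δl₂) = δl₂ ≫ (F.comul ▷ Y₂) ≫ (α_ F.C F.C Y₂).hom)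
    (hcu₂ : δl₂ ≫ (F.counit ▷ Y₂) = (λ_ Y₂).inv)
    (hco₃ : δl₃ ≫ (F.C ◁ δl₃) = δl₃ ≫ (F.comul ▷ Y₃) ≫ (α_ F.C F.C Y₃).hom)
    (hcu₃ : δl₃ ≫ (F.counit ▷ Y₃) = (λ_ Y₃).inv)
    -- a reflexive pair of comodule morphisms with common section and its coequalizer
    (u v : Y₁ ⟶ Y₂) (s : Y₂ ⟶ Y₁) (q : Y₂ ⟶ Y₃)
    (hu : u ≫ δl₂ = δl₁ ≫ (F.C ◁ u)) (hv : v ≫ δl₂ = δl₁ ≫ (F.C ◁ v))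
    (hs : s ≫ δl₁ = δl₂ ≫ (F.C ◁ s)) (hqc : q ≫ δl₃ = δl₂ ≫ (F.C ◁ q))
    (hsu : s ≫ u = 𝟙 Y₂) (hsv : s ≫ v = 𝟙 Y₂)
    (hq : u ≫ q = v ≫ q) (hcolim : IsColimit (Cofork.ofπ q hq)) :
    letI a₁ : X ⊗ Y₁ ⟶ X ⊗ Y₁ :=
      (δr ⊗ₘ δl₁) ≫ (α_ X F.C (F.C ⊗ Y₁)).hom ≫ (X ◁ (α_ F.C F.C Y₁).inv) ≫
        (X ◁ (F.mul ▷ Y₁)) ≫ (X ◁ (F.counit ▷ Y₁)) ≫ (X ◁ (λ_ Y₁).hom)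
    letI a₂ : X ⊗ Y₂ ⟶ X ⊗ Y₂ :=
      (δr ⊗ₘ δl₂) ≫ (α_ X F.C (F.C ⊗ Y₂)).hom ≫ (X ◁ (α_ F.C F.C Y₂).inv) ≫
        (X ◁ (F.mul ▷ Y₂)) ≫ (X ◁ (F.counit ▷ Y₂)) ≫ (X ◁ (λ_ Y₂).hom)
    letI a₃ : X ⊗ Y₃ ⟶ X ⊗ Y₃ :=
      (δr ⊗ₘ δl₃) ≫ (α_ X F.C (F.C ⊗ Y₃)).hom ≫ (X ◁ (α_ F.C F.C Y₃).inv) ≫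
        (X ◁ (F.mul ▷ Y₃)) ≫ (X ◁ (F.counit ▷ Y₃)) ≫ (X ◁ (λ_ Y₃).hom)
    ∀ (W₁ W₂ W₃ : V)
      (p₁ : X ⊗ Y₁ ⟶ W₁) (i₁ : W₁ ⟶ X ⊗ Y₁)
      (p₂ : X ⊗ Y₂ ⟶ W₂) (i₂ : W₂ ⟶ X ⊗ Y₂)
      (p₃ : X ⊗ Y₃ ⟶ W₃) (i₃ : W₃ ⟶ X ⊗ Y₃),
      p₁ ≫ i₁ = a₁ → i₁ ≫ p₁ = 𝟙 W₁ →
      p₂ ≫ i₂ = a₂ → i₂ ≫ p₂ = 𝟙 W₂ →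
      p₃ ≫ i₃ = a₃ → i₃ ≫ p₃ = 𝟙 W₃ →
      ∀ (w : (i₁ ≫ (X ◁ u) ≫ p₂) ≫ (i₂ ≫ (X ◁ q) ≫ p₃)
           = (i₁ ≫ (X ◁ v) ≫ p₂) ≫ (i₂ ≫ (X ◁ q) ≫ p₃)),
        Nonempty (IsColimit (Cofork.ofπ (i₂ ≫ (X ◁ q) ≫ p₃) w)) := by
  intro W₁ W₂ W₃ p₁ i₁ p₂ i₂ p₃ i₃ hpi₁ hip₁ hpi₂ hip₂ hpi₃ hip₃ w
  have nu : (X ◁ u) ≫ p₂ ≫ i₂ = (p₁ ≫ i₁) ≫ (X ◁ u) := by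
    rw [hpi₁, hpi₂]; exact a_natural F X δr δl₁ δl₂ u hu
  have nv : (X ◁ v) ≫ p₂ ≫ i₂ = (p₁ ≫ i₁) ≫ (X ◁ v) := by
    rw [hpi₁, hpi₂]; exact a_natural F X δr δl₁ δl₂ v hv
  have nq : (X ◁ q) ≫ p₃ ≫ i₃ = (p₂ ≫ i₂) ≫ (X ◁ q) := by
    rw [hpi₂, hpi₃]; exact a_natural F X δr δl₂ δl₃ q hqc
  have wq : (X ◁ u) ≫ (X ◁ q) = (X ◁ v) ≫ (X ◁ q) := by
    rw [← MonoidalCategory.whiskerLeft_comp, ← MonoidalCategory.whiskerLeft_comp, hq]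
  obtain ⟨hc⟩ := hpres Y₁ Y₂ u v s hsu hsv Y₃ q hq hcolim wq
  have p₂π : p₂ ≫ i₂ ≫ (X ◁ q) ≫ p₃ = (X ◁ q) ≫ p₃ := by
    have nq' := reassoc_of% nq
    rw [← nq' p₃, hip₃, Category.comp_id]
  refine ⟨Cofork.IsColimit.mk' _ (fun sk => ?_)⟩
  have hsk := sk.condition
  have h0 : (X ◁ u) ≫ p₂ ≫ sk.π = (X ◁ v) ≫ p₂ ≫ sk.π := by
    have h1 := congrArg (fun t => p₁ ≫ t) hsk
    simp only [Category.assoc] at h1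
    rwa [← reassoc_of% nu, ← reassoc_of% nv, reassoc_of% hip₂] at h1
  refine ⟨i₃ ≫ Cofork.IsColimit.desc hc (p₂ ≫ sk.π) h0, ?_, ?_⟩
  · have hd : (X ◁ q) ≫ Cofork.IsColimit.desc hc (p₂ ≫ sk.π) h0 = p₂ ≫ sk.π := by
      simpa using Cofork.IsColimit.π_desc' hc (p₂ ≫ sk.π) h0
    simp only [Cofork.π_ofπ, Category.assoc]
    rw [reassoc_of% nq, reassoc_of% hip₂, hd, reassoc_of% hip₂]
  · intro m hm
    simp only [Cofork.π_ofπ, Category.assoc] at hm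
    have hℓ : p₃ ≫ m = Cofork.IsColimit.desc hc (p₂ ≫ sk.π) h0 := by
      refine Cofork.IsColimit.hom_ext hc ?_
      have hd : (X ◁ q) ≫ Cofork.IsColimit.desc hc (p₂ ≫ sk.π) h0 = p₂ ≫ sk.π := by
        simpa using Cofork.IsColimit.π_desc' hc (p₂ ≫ sk.π) h0
      simp only [Cofork.π_ofπ, Category.assoc]
      rw [hd, ← reassoc_of% p₂π, hm]
    rw [← hℓ, reassoc_of% hip₃]
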